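/- arXiv:math/0609379 — 3 statements merged into one kernel-verified Lean document; each statement's English description precedes it below -/
import Mathlib

section
/- Let X be a finite simplicial complex equipped with a piecewise flat metric, let x ∈ X, and let r be a real number with 2r < sys(X,x). Then the inclusion B(x,r) ⊆ X induces the zero homomorphism of fundamental groups; in particular, every loop contained in B(x,r) is null-homotopic in X. -/
open Set MeasureTheory Metric
open scoped ENNReal

noncomputable section

/-! ### Finite simplicial complexes and their geometric realizations -/

/-- A finite abstract simplicial complex, with vertex set `Fin n`. -/
structure FinComplex where
  /-- number of vertices -/
  n : ℕ
  /-- the faces (simplices) of the complex -/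
  faces : Finset (Finset (Fin n))
  not_empty_mem : ∅ ∉ faces
  down_closed : ∀ s ∈ faces, ∀ t ⊆ s, t.Nonempty → t ∈ faces

/-- `K.DimLE d` means that the simplicial complex `K` has dimension at most `d`. -/
def FinComplex.DimLE (K : FinComplex) (d : ℕ) : Prop :=
  ∀ s ∈ K.faces, s.card ≤ d + 1

/-- The geometric realization of a finite simplicial complex, as the set of barycentric
coordinate functions supported on a face. -/
def FinComplex.space (K : FinComplex) : Type :=
  {w : Fin K.n → ℝ // (∀ i, 0 ≤ w i) ∧ (∑ i, w i) = 1 ∧ ∃ s ∈ K.faces, ∀ i ∉ s, w i = 0}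

/-- The canonical (weak = metric, since `K` is finite) topology on the geometric
realization, induced from the product topology on `Fin K.n → ℝ`. -/
def FinComplex.topology (K : FinComplex) : TopologicalSpace K.space :=
  instTopologicalSpaceSubtype

/-- The closed geometric simplex of the realization corresponding to a face `s`. -/
def FinComplex.cell (K : FinComplex) (s : Finset (Fin K.n)) : Set K.space :=
  {w | ∀ i ∉ s, w.1 i = 0}

/-! ### Lengths of paths, piecewise flat metrics -/

/-- The length of a path in a metric space: its total variation, in `ℝ≥0∞`. -/
def pathELength {X : Type*} [PseudoEMetricSpace X] {x y : X} (γ : Path x y) : ℝ≥0∞ :=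
  eVariationOn γ Set.univ

/-- A metric is a length (intrinsic) metric if the distance between two points is the
infimum of the lengths of paths joining them. -/
def IsLengthMetric (X : Type*) [MetricSpace X] : Prop :=
  ∀ x y : X, edist x y = ⨅ γ : Path x y, pathELength γ

/-- A subset `A` of a metric space is a flat `k`-simplex if it is isometric to the convex hull
of `k` affinely independent points of a Euclidean space. -/
def IsFlatCell {X : Type*} [MetricSpace X] (A : Set X) (N k : ℕ) : Prop :=
  ∃ p : Fin k → EuclideanSpace ℝ (Fin N), AffineIndependent ℝ p ∧
    Nonempty (A ≃ᵢ (convexHull ℝ (Set.range p) : Set (EuclideanSpace ℝ (Fin N))))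

/-- A metric space structure on the geometric realization of a finite simplicial complex `K`
is a piecewise flat metric if it induces the canonical topology, is a length metric, and
each closed simplex is isometric to an affine Euclidean simplex. -/
structure IsPiecewiseFlat (K : FinComplex) [m : MetricSpace K.space] : Prop where
  compatible : m.toUniformSpace.toTopologicalSpace = K.topology
  length_metric : IsLengthMetric K.space
  flat : ∀ s ∈ K.faces, IsFlatCell (K.cell s) K.n s.card

/-! ### Systolic quantities -/

/-- The `d`-dimensional Hausdorff measure of a subset of a metric space. -/
def hmeas {X : Type*} [MetricSpace X] (d : ℝ) (s : Set X) : ℝ≥0∞ :=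
  @MeasureTheory.Measure.hausdorffMeasure X _ (borel X) (@BorelSpace.mk X _ (borel X) rfl) d s

/-- The area of a metric space: its `2`-dimensional Hausdorff measure. -/
def eArea (X : Type*) [MetricSpace X] : ℝ≥0∞ := hmeas 2 (Set.univ : Set X)

/-- The area, as a real number. -/
def areaR (X : Type*) [MetricSpace X] : ℝ := (eArea X).toReal

/-- The pointed systole at `x` : the least (infimal) length of a loop based at `x` which is
not null-homotopic. -/
def psystole (X : Type*) [MetricSpace X] (x : X) : ℝ≥0∞ :=
  ⨅ (γ : Path x x) (_ : ¬ γ.Homotopic (Path.refl x)), pathELength γ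

/-- The systole: the least (infimal) length of a noncontractible loop. -/
def systole (X : Type*) [MetricSpace X] : ℝ≥0∞ :=
  ⨅ x : X, psystole X x

/-- The systole, as a real number. -/
def sysR (X : Type*) [MetricSpace X] : ℝ := (systole X).toReal

/-- The pointed systole, as a real number. -/
def psysR (X : Type*) [MetricSpace X] (x : X) : ℝ := (psystole X x).toReal

/-- The systolic area `area/sys²` of a piecewise flat metric on (the realization of) a
finite simplicial complex, in `ℝ≥0∞`. -/
def complexSysArea (K : FinComplex) [MetricSpace K.space] : ℝ≥0∞ :=
  eArea K.space / (systole K.space) ^ 2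

/-! ### Group-theoretic notions -/

/-- A group is finitely presentable if it is isomorphic to the quotient of a finitely
generated free group by the normal closure of finitely many relators. -/
def IsFinitelyPresentable (G : Type*) [Group G] : Prop :=
  ∃ (k : ℕ) (rels : Finset (FreeGroup (Fin k))),
    Nonempty (G ≃* PresentedGroup (rels : Set (FreeGroup (Fin k))))

/-- A group is unfree if it is not isomorphic to any free group. -/
def IsUnfree (G : Type*) [Group G] : Prop :=
  ∀ S : Type, ¬ Nonempty (G ≃* FreeGroup S)

/-- A group has zero Grushko free index if it does not split as a free product `ℤ * H`. -/
def ZeroGrushkoIndex (G : Type*) [Group G] : Prop :=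
  ∀ (H : Type) [Group H], ¬ Nonempty (G ≃* Monoid.Coprod (Multiplicative ℤ) H)

/-- `GrushkoDecomp G p H` means `G ≅ F_p * H` with `F_p` free of rank `p` and `H` of zero
Grushko free index; by Grushko's theorem every finitely generated group has such a
decomposition, `p` being its Grushko free index and `H` its unfree factor. -/
def GrushkoDecomp (G : Type*) [Group G] (p : ℕ) (H : Type) [Group H] : Prop :=
  ZeroGrushkoIndex H ∧ Nonempty (G ≃* Monoid.Coprod (FreeGroup (Fin p)) H)

/-- `H` is (a representative of) the unfree factor of `G`. -/
def IsUnfreeFactor (H : Type) [Group H] (G : Type*) [Group G] : Prop :=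
  ∃ p : ℕ, GrushkoDecomp G p H

/-- `RepresentedBy G K` : the (path-connected, piecewise flat) finite `2`-complex `K` has
fundamental group isomorphic to `G`. -/
def RepresentedBy (G : Type*) [Group G] (K : FinComplex) [MetricSpace K.space] : Prop :=
  IsPiecewiseFlat K ∧ K.DimLE 2 ∧ PathConnectedSpace K.space ∧
    ∃ x : K.space, Nonempty (G ≃* FundamentalGroup K.space x)

/-- The systolic area `σ(G)` of a group `G`: the infimum of `area/sys²` over all piecewise
flat metrics on finite `2`-complexes with fundamental group isomorphic to `G`
(the reciprocal of the systolic ratio `SR(G)`). -/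
def groupSysArea (G : Type*) [Group G] : ℝ≥0∞ :=
  ⨅ (K : FinComplex) (m : MetricSpace K.space) (_ : @RepresentedBy G _ K m),
    @complexSysArea K m

end

noncomputable section

/-- The fundamental group of (the geometric realization of) a finite simplicial complex,
with respect to its canonical topology. -/
def FinComplex.pi1 (K : FinComplex) (x : K.space) : Type :=
  @FundamentalGroup K.space K.topology x

noncomputable instance (K : FinComplex) (x : K.space) : Group (K.pi1 x) := by
  letI := K.topology
  exact (inferInstance : Group (FundamentalGroup K.space x))

end


open Set

section PathAlgebra

variable {X : Type*} [TopologicalSpace X] {a b c : X}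

lemma homotopic_trans_refl (p : Path a b) : (p.trans (Path.refl b)).Homotopic p :=
  ⟨Path.Homotopy.transRefl p⟩

lemma homotopic_refl_trans (p : Path a b) : ((Path.refl a).trans p).Homotopic p :=
  ⟨Path.Homotopy.reflTrans p⟩

lemma homotopic_trans_assoc (p : Path a b) (q : Path b c) {d : X} (r : Path c d) :
    ((p.trans q).trans r).Homotopic (p.trans (q.trans r)) :=
  ⟨Path.Homotopy.transAssoc p q r⟩

lemma homotopic_symm_trans (p : Path a b) : (p.symm.trans p).Homotopic (Path.refl b) :=
  ⟨(Path.Homotopy.reflSymmTrans p).symm⟩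

/-- Cancellation: if `p ⬝ q⁻¹` is null-homotopic then `p` and `q` are homotopic. -/
lemma homotopic_of_trans_symm {p q : Path a b}
    (h : (p.trans q.symm).Homotopic (Path.refl a)) : p.Homotopic q := by
  have h1 : p.Homotopic (p.trans (q.symm.trans q)) :=
    ((homotopic_trans_refl p).symm).trans
      (Path.Homotopic.hcomp (Path.Homotopic.refl p) (homotopic_symm_trans q).symm)
  refine h1.trans ?_
  have h2 : (p.trans (q.symm.trans q)).Homotopic ((p.trans q.symm).trans q) :=
    (homotopic_trans_assoc p q.symm q).symm
  refine h2.trans ?_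
  exact (Path.Homotopic.hcomp h (Path.Homotopic.refl q)).trans (homotopic_refl_trans q)

lemma homotopic_cast {a' b' : X} (ha : a' = a) (hb : b' = b) {p q : Path a b}
    (h : p.Homotopic q) : (p.cast ha hb).Homotopic (q.cast ha hb) := by
  subst ha; subst hb
  rwa [Path.cast_rfl_rfl, Path.cast_rfl_rfl]

lemma cast_trans {a' c' : X} (p : Path a b) (q : Path b c) (ha : a' = a) (hc : c' = c) :
    (p.trans q).cast ha hc = (p.cast ha rfl).trans (q.cast rfl hc) := by
  subst ha; subst hc
  rw [Path.cast_rfl_rfl, Path.cast_rfl_rfl, Path.cast_rfl_rfl]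

lemma cast_symm {a' b' : X} (p : Path a b) (ha : a' = a) (hb : b' = b) :
    (p.symm).cast hb ha = (p.cast ha hb).symm := by
  subst ha; subst hb
  rw [Path.cast_rfl_rfl, Path.cast_rfl_rfl]

end PathAlgebra
section PathLength

variable {X : Type*} [PseudoEMetricSpace X] {a b c : X}

lemma pathELength_cast {a' b' : X} (p : Path a b) (ha : a' = a) (hb : b' = b) :
    pathELength (p.cast ha hb) = pathELength p := by
  subst ha; subst hb; rw [Path.cast_rfl_rfl]

lemma pathELength_refl (a : X) : pathELength (Path.refl a) = 0 := by
  apply eVariationOn.constant_on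
  rintro u ⟨t, -, rfl⟩ v ⟨t', -, rfl⟩; rfl

lemma edist_le_pathELength (p : Path a b) (s t : unitInterval) :
    edist (p s) (p t) ≤ pathELength p :=
  eVariationOn.edist_le _ (Set.mem_univ s) (Set.mem_univ t)

lemma edist_source_le_pathELength (p : Path a b) (t : unitInterval) :
    edist a (p t) ≤ pathELength p := by
  have := edist_le_pathELength p 0 t
  rwa [p.source] at this

lemma pathELength_symm (p : Path a b) : pathELength p.symm = pathELength p := by
  have hφ : AntitoneOn unitInterval.symm (Set.univ : Set unitInterval) := by
    intro s _ t _ hst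
    rw [← Subtype.coe_le_coe, unitInterval.coe_symm_eq, unitInterval.coe_symm_eq]
    have : (s : ℝ) ≤ t := hst
    linarith
  have hc : ⇑p.symm = ⇑p ∘ unitInterval.symm := rfl
  rw [pathELength, hc, eVariationOn.comp_eq_of_antitoneOn (⇑p) unitInterval.symm hφ,
    Set.image_univ, unitInterval.symm_bijective.surjective.range_eq]
  rfl

lemma pathELength_trans_le (p : Path a b) (q : Path b c) :
    pathELength (p.trans q) ≤ pathELength p + pathELength q := by
  classical
  set m : unitInterval := ⟨1/2, by norm_num⟩ with hm
  have huniv : (Set.univ : Set unitInterval) = Set.Icc 0 1 := by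
    ext t
    simp only [Set.mem_univ, true_iff, Set.mem_Icc]
    exact ⟨unitInterval.nonneg', unitInterval.le_one'⟩
  have key := eVariationOn.Icc_add_Icc (⇑(p.trans q)) (a := (0 : unitInterval)) (b := m)
    (c := (1 : unitInterval)) (s := Set.univ)
    (by rw [← Subtype.coe_le_coe]; norm_num)
    (by rw [← Subtype.coe_le_coe]; norm_num) (Set.mem_univ m)
  rw [Set.univ_inter, Set.univ_inter, Set.univ_inter] at key
  have h1 : eVariationOn (⇑(p.trans q)) (Set.Icc 0 m) ≤ pathELength p := by
    have heq : Set.EqOn (⇑(p.trans q))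
        (⇑p ∘ fun t : unitInterval => Set.projIcc (0:ℝ) 1 zero_le_one (2 * t))
        (Set.Icc 0 m) := by
      intro t ht
      have ht' : (t : ℝ) ≤ 1/2 := ht.2
      have hmem : (2 * (t : ℝ)) ∈ Set.Icc (0:ℝ) 1 := by
        constructor
        · have := t.2.1; linarith
        · linarith
      rw [Path.trans_apply]
      rw [dif_pos ht']
      exact congrArg p (Set.projIcc_of_mem zero_le_one hmem).symm
    rw [eVariationOn.eq_of_eqOn heq]
    refine eVariationOn.comp_le_of_monotoneOn (⇑p) _ ?_ (Set.mapsTo_univ _ _)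
    intro s _ t _ hst
    exact Set.monotone_projIcc _ (by have : (s:ℝ) ≤ t := hst; linarith)
  have h2 : eVariationOn (⇑(p.trans q)) (Set.Icc m 1) ≤ pathELength q := by
    have heq : Set.EqOn (⇑(p.trans q))
        (⇑q ∘ fun t : unitInterval => Set.projIcc (0:ℝ) 1 zero_le_one (2 * t - 1))
        (Set.Icc m 1) := by
      intro t ht
      have ht' : (1/2 : ℝ) ≤ (t : ℝ) := ht.1
      have hmem : (2 * (t : ℝ) - 1) ∈ Set.Icc (0:ℝ) 1 := by
        constructor
        · linarith
        · have := t.2.2; linarith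
      rw [Path.trans_apply]
      by_cases h : (t : ℝ) ≤ 1/2
      · rw [dif_pos h]
        have ht2 : (t : ℝ) = 1/2 := le_antisymm h ht'
        have h1' : (⟨2 * (t:ℝ), ⟨by have := t.2.1; linarith, by linarith⟩⟩ : unitInterval) = 1 := by
          apply Subtype.ext; show 2 * (t:ℝ) = 1; linarith
        rw [h1', p.target]
        have h0' : Set.projIcc (0:ℝ) 1 zero_le_one (2 * (t:ℝ) - 1) = 0 := by
          rw [Set.projIcc_of_mem _ hmem]
          apply Subtype.ext; show 2 * (t:ℝ) - 1 = 0; linarith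
        simp only [Function.comp_apply, h0', q.source]
      · rw [dif_neg h]
        exact congrArg q (Set.projIcc_of_mem zero_le_one hmem).symm
    rw [eVariationOn.eq_of_eqOn heq]
    refine eVariationOn.comp_le_of_monotoneOn (⇑q) _ ?_ (Set.mapsTo_univ _ _)
    intro s _ t _ hst
    exact Set.monotone_projIcc _ (by have : (s:ℝ) ≤ t := hst; linarith)
  calc pathELength (p.trans q) = eVariationOn (⇑(p.trans q)) (Set.Icc 0 1) := by
        rw [pathELength, huniv]
    _ = eVariationOn (⇑(p.trans q)) (Set.Icc 0 m) + eVariationOn (⇑(p.trans q)) (Set.Icc m 1) :=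
        key.symm
    _ ≤ pathELength p + pathELength q := add_le_add h1 h2

end PathLength

section Star

/-- Every point of a piecewise flat complex has an open neighbourhood (its open star) inside
which any two paths with common endpoints are homotopic. -/
lemma star_spec (K : FinComplex) [MetricSpace K.space] (hflat : IsPiecewiseFlat K)
    (w : K.space) :
    ∃ U : Set K.space, IsOpen U ∧ w ∈ U ∧
      ∀ (a b : K.space) (p q : Path a b), Set.range ⇑p ⊆ U → Set.range ⇑q ⊆ U →
        p.Homotopic q := by
  classical
  have htop : (UniformSpace.toTopologicalSpace : TopologicalSpace K.space) = K.topology := hflat.compatible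
  have hval : Continuous (fun u : K.space => (u.1 : Fin K.n → ℝ)) := by
    rw [htop]
    exact continuous_induced_dom
  set U : Set K.space := {u : K.space | ∀ i, 0 < w.1 i → 0 < u.1 i} with hUdef
  have hwU : w ∈ U := fun i h => h
  have hopen : IsOpen U := by
    have hU2 : U = ⋂ i : Fin K.n, {u : K.space | 0 < w.1 i → 0 < u.1 i} := by
      ext u; simp [hUdef, Set.mem_iInter, Set.mem_setOf_eq]
    rw [hU2]
    refine isOpen_iInter_of_finite fun i => ?_
    by_cases h : 0 < w.1 i
    · have h2 : {u : K.space | 0 < w.1 i → 0 < u.1 i}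
          = (fun u : K.space => u.1 i) ⁻¹' Set.Ioi 0 := by
        ext u; simp [h]
      rw [h2]
      exact isOpen_Ioi.preimage ((continuous_apply i).comp hval)
    · have h2 : {u : K.space | 0 < w.1 i → 0 < u.1 i} = Set.univ := by
        ext u; simp [h]
      rw [h2]; exact isOpen_univ
  refine ⟨U, hopen, hwU, ?_⟩
  intro a b p q hp hq
  set S : Set (Fin K.n → ℝ) :=
    {f | ((∀ i, 0 ≤ f i) ∧ (∑ i, f i) = 1 ∧ ∃ s ∈ K.faces, ∀ i ∉ s, f i = 0) ∧
      ∀ i, 0 < w.1 i → 0 < f i} with hSdef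
  have hwS : w.1 ∈ S := ⟨w.2, fun i h => h⟩
  have hstar : StarConvex ℝ w.1 S := by
    intro f hf α β hα hβ hαβ
    obtain ⟨⟨hf0, hf1, s, hsK, hs0⟩, hfpos⟩ := hf
    obtain ⟨hw0, hw1, -⟩ := w.2
    have happly : ∀ i, (α • w.1 + β • f) i = α * w.1 i + β * f i := fun i => rfl
    refine ⟨⟨fun i => ?_, ?_, ⟨s, hsK, fun i hi => ?_⟩⟩, fun i hi => ?_⟩
    · rw [happly]
      exact add_nonneg (mul_nonneg hα (hw0 i)) (mul_nonneg hβ (hf0 i))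
    · have : ∑ i, (α • w.1 + β • f) i = α * (∑ i, w.1 i) + β * (∑ i, f i) := by
        simp only [happly, Finset.sum_add_distrib, Finset.mul_sum]
      rw [this, hw1, hf1]; linarith
    · have hfi : f i = 0 := hs0 i hi
      have hwi : w.1 i = 0 := by
        by_contra h'
        have hwpos : 0 < w.1 i := lt_of_le_of_ne (hw0 i) (Ne.symm h')
        exact absurd hfi (ne_of_gt (hfpos i hwpos))
      rw [happly, hfi, hwi]; ring
    · have hfi : 0 < f i := hfpos i hi
      rw [happly]
      rcases eq_or_lt_of_le hα with hα0 | hαpos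
      · have hβ1 : β = 1 := by linarith
        rw [← hα0, hβ1]; simpa using hfi
      · have h1 : 0 < α * w.1 i := mul_pos hαpos hi
        have h2 : 0 ≤ β * f i := mul_nonneg hβ hfi.le
        linarith
  haveI hcS : ContractibleSpace ↥S := hstar.contractibleSpace ⟨w.1, hwS⟩
  have ha : a ∈ U := hp ⟨0, p.source⟩
  have hb : b ∈ U := hp ⟨1, p.target⟩
  let e : ↥U ≃ₜ ↥S :=
    { toFun := fun u => ⟨u.1.1, ⟨u.1.2, u.2⟩⟩
      invFun := fun f => ⟨⟨f.1, f.2.1⟩, fun i h => f.2.2 i h⟩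
      left_inv := fun u => rfl
      right_inv := fun f => rfl
      continuous_toFun := by
        apply Continuous.subtype_mk
        exact hval.comp continuous_subtype_val
      continuous_invFun := by
        apply Continuous.subtype_mk
        rw [htop]
        exact Continuous.subtype_mk continuous_subtype_val _ }
  haveI hcU : ContractibleSpace ↥U := e.contractibleSpace_iff.mpr hcS
  haveI : SimplyConnectedSpace ↥U := inferInstance
  let p' : Path (⟨a, ha⟩ : ↥U) (⟨b, hb⟩ : ↥U) :=
    ⟨⟨fun t => ⟨p t, hp (Set.mem_range_self t)⟩, p.continuous.subtype_mk _⟩,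
      Subtype.ext p.source, Subtype.ext p.target⟩
  let q' : Path (⟨a, ha⟩ : ↥U) (⟨b, hb⟩ : ↥U) :=
    ⟨⟨fun t => ⟨q t, hq (Set.mem_range_self t)⟩, q.continuous.subtype_mk _⟩,
      Subtype.ext q.source, Subtype.ext q.target⟩
  have h' : p'.Homotopic q' := SimplyConnectedSpace.paths_homotopic p' q'
  let f : C(↥U, K.space) := ⟨Subtype.val, continuous_subtype_val⟩
  have hh := Path.Homotopic.map h' f
  have e1 : Path.map p' f.continuous = p := by ext t; rfl
  have e2 : Path.map q' f.continuous = q := by ext t; rfl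
  rwa [e1, e2] at hh

end Star

section Truncation

variable {X : Type*} [TopologicalSpace X] {a b : X}

lemma truncateOfLE_apply (γ : Path a b) {t₀ t₁ : ℝ} (h : t₀ ≤ t₁) (u : unitInterval) :
    γ.truncateOfLE h u = γ.extend (min (max ↑u t₀) t₁) := rfl

lemma truncateOfLE_self (γ : Path a b) (s : ℝ) :
    γ.truncateOfLE (le_refl s) = Path.refl (γ.extend s) := by
  ext u
  show γ.extend (min (max ↑u s) s) = γ.extend s
  rw [min_eq_right (le_max_right _ _)]

lemma truncateOfLE_zero_one (γ : Path a b) :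
    γ.truncateOfLE (zero_le_one (α := ℝ)) = γ.cast γ.extend_zero γ.extend_one := by
  ext u
  show γ.extend (min (max ↑u 0) 1) = γ u
  rw [max_eq_left u.2.1, min_eq_left u.2.2]
  exact γ.extend_extends' u

lemma truncate_split (γ : Path a b) {s t : ℝ} (h0 : 0 ≤ s) (hst : s ≤ t) (h1 : t ≤ 1) :
    ((γ.truncateOfLE h0).trans (γ.truncateOfLE hst)).Homotopic
      (γ.truncateOfLE (h0.trans hst)) := by
  have hs1 : s ≤ 1 := hst.trans h1
  have hf_mem : ∀ u : unitInterval, max (min (2 * (u:ℝ)) s) (2 * (u:ℝ) - 1) ∈ unitInterval := by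
    intro u
    constructor
    · exact le_trans (le_min (by have := u.2.1; linarith) h0) (le_max_left _ _)
    · exact max_le (le_trans (min_le_right _ _) hs1) (by have := u.2.2; linarith)
  set f : unitInterval → unitInterval :=
    fun u => ⟨max (min (2 * (u:ℝ)) s) (2 * (u:ℝ) - 1), hf_mem u⟩ with hfdef
  have hf : Continuous f := by
    apply Continuous.subtype_mk
    have c2 : Continuous fun u : unitInterval => 2 * (u : ℝ) :=
      continuous_const.mul continuous_subtype_val
    exact (c2.min continuous_const).max (c2.sub continuous_const)
  have hf0 : f 0 = 0 := by
    apply Subtype.ext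
    show max (min (2 * ((0:unitInterval):ℝ)) s) (2 * ((0:unitInterval):ℝ) - 1) = 0
    rw [show ((0:unitInterval):ℝ) = 0 from rfl]
    rw [show (2:ℝ) * 0 = 0 by ring, min_eq_left h0]
    rw [max_eq_left (by norm_num)]
  have hf1 : f 1 = 1 := by
    apply Subtype.ext
    show max (min (2 * ((1:unitInterval):ℝ)) s) (2 * ((1:unitInterval):ℝ) - 1) = 1
    rw [show ((1:unitInterval):ℝ) = 1 from rfl]
    rw [show (2:ℝ) * 1 = 2 by ring, min_eq_right (by linarith)]
    rw [max_eq_right (by linarith), show (2:ℝ) - 1 = 1 by ring]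
  have heq : (γ.truncateOfLE h0).trans (γ.truncateOfLE hst)
      = (γ.truncateOfLE (h0.trans hst)).reparam f hf hf0 hf1 := by
    ext u
    rw [Path.trans_apply]
    have hrep : ((γ.truncateOfLE (h0.trans hst)).reparam f hf hf0 hf1) u
        = γ.extend (min (max (↑(f u)) 0) t) := rfl
    rw [hrep]
    have hfu : (↑(f u) : ℝ) = max (min (2 * (u:ℝ)) s) (2 * (u:ℝ) - 1) := rfl
    by_cases h : (u : ℝ) ≤ 1/2
    · rw [dif_pos h]
      show γ.extend (min (max (2*(u:ℝ)) 0) s) = _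
      have hmin_nonneg : 0 ≤ min (2 * (u:ℝ)) s := le_min (by have := u.2.1; linarith) h0
      have hfu' : (↑(f u) : ℝ) = min (2 * (u:ℝ)) s := by
        rw [hfu]
        exact max_eq_left (le_trans (by linarith) hmin_nonneg)
      rw [hfu', max_eq_left hmin_nonneg, max_eq_left (by have := u.2.1; linarith),
        min_eq_left (le_trans (min_le_right _ _) hst)]
    · rw [dif_neg h]
      push_neg at h
      show γ.extend (min (max (2*(u:ℝ) - 1) s) t) = _
      have hfu' : (↑(f u) : ℝ) = max s (2 * (u:ℝ) - 1) := by
        rw [hfu, min_eq_right (by linarith)]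
      have hmax_nonneg : (0:ℝ) ≤ max s (2 * (u:ℝ) - 1) := le_trans h0 (le_max_left _ _)
      rw [hfu', max_eq_left hmax_nonneg, max_comm s (2 * (u:ℝ) - 1)]
  rw [heq]
  have hrep2 : (γ.truncateOfLE (h0.trans hst)).Homotopic
      ((γ.truncateOfLE (h0.trans hst)).reparam f hf hf0 hf1) :=
    ⟨Path.Homotopy.reparam _ f hf hf0 hf1⟩
  exact hrep2.symm

end Truncation


section MoreAlgebra

variable {X : Type*} [TopologicalSpace X]

lemma homotopic_loop_cancel {x a b : X} (qs : Path x a) (c : Path a b) (qt : Path x b)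
    (H : (qs.trans c).Homotopic qt) : c.Homotopic (qs.symm.trans qt) := by
  have h1 : c.Homotopic ((qs.symm.trans qs).trans c) :=
    ((homotopic_refl_trans c).symm).trans
      (Path.Homotopic.hcomp (homotopic_symm_trans qs).symm (Path.Homotopic.refl c))
  refine h1.trans ?_
  refine (homotopic_trans_assoc qs.symm qs c).trans ?_
  exact Path.Homotopic.hcomp (Path.Homotopic.refl qs.symm) H

end MoreAlgebra

/-- If `2r < sys(X,x)`, then the inclusion `B(x,r) ⊆ X` induces the zero
homomorphism of fundamental groups: every loop contained in `B(x,r)` is null-homotopic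
in `X`. -/
theorem ball_inclusion_pi1_trivial
    (K : FinComplex) [MetricSpace K.space] (hflat : IsPiecewiseFlat K)
    (x : K.space) (r : ℝ) (hr : ENNReal.ofReal (2 * r) < psystole K.space x) :
    ∀ y ∈ Metric.closedBall x r, ∀ γ : Path y y,
      Set.range γ ⊆ Metric.closedBall x r → γ.Homotopic (Path.refl y) := by
  classical
  intro y hy γ hγ
  have hr0 : 0 ≤ r := le_trans dist_nonneg (Metric.mem_closedBall.mp hy)
  -- a real budget strictly between 2r and the pointed systole
  obtain ⟨R, hR0, hR1, hR2⟩ := ENNReal.lt_iff_exists_real_btwn.mp hr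
  have h2rR : 2 * r < R := by
    by_contra h
    push_neg at h
    exact absurd (lt_of_lt_of_le hR1 (ENNReal.ofReal_le_ofReal h)) (lt_irrefl _)
  set ε : ℝ := (R - 2 * r) / 8 with hεdef
  have hεpos : 0 < ε := by
    apply div_pos <;> linarith
  -- short paths from `x` to points of the ball
  have hshort : ∀ z : K.space, z ∈ Metric.closedBall x r →
      ∃ p : Path x z, pathELength p < ENNReal.ofReal (r + ε) := by
    intro z hz
    have hedist : edist x z ≤ ENNReal.ofReal r := by
      rw [edist_dist]
      exact ENNReal.ofReal_le_ofReal (by rw [dist_comm]; exact Metric.mem_closedBall.mp hz)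
    have hlt : edist x z < ENNReal.ofReal (r + ε) :=
      lt_of_le_of_lt hedist ((ENNReal.ofReal_lt_ofReal_iff (by linarith)).mpr (by linarith))
    rw [hflat.length_metric x z] at hlt
    exact iInf_lt_iff.mp hlt
  choose τ hτ using hshort
  -- every point visited by γ lies in the ball
  have hin : ∀ v : ℝ, γ.extend v ∈ Metric.closedBall x r := by
    intro v
    exact hγ ⟨Set.projIcc 0 1 zero_le_one v, rfl⟩
  -- loops at `x` shorter than `R` are null-homotopic
  have hnull : ∀ ℓ : Path x x, pathELength ℓ < ENNReal.ofReal R → ℓ.Homotopic (Path.refl x) := by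
    intro ℓ hℓ
    by_contra hcon
    have hle : psystole K.space x ≤ pathELength ℓ :=
      iInf_le_of_le ℓ (iInf_le _ hcon)
    exact absurd (lt_of_le_of_lt hle (hℓ.trans hR2)) (lt_irrefl _)
  -- star covering and a Lebesgue number
  have hstars := fun z : K.space => star_spec K hflat z
  choose Ustar hUopen hUmem hUhom using hstars
  obtain ⟨lam, hlampos, hlam⟩ :=
    lebesgue_number_lemma_of_metric (isCompact_range γ.continuous) hUopen
      (fun z _ => Set.mem_iUnion.mpr ⟨z, hUmem z⟩)
  set μ : ℝ := min ε (lam / 2) with hμdef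
  have hμpos : 0 < μ := lt_min hεpos (by linarith)
  have hμε : μ ≤ ε := min_le_left _ _
  have hμlam : μ < lam := lt_of_le_of_lt (min_le_right _ _) (by linarith)
  -- uniform continuity of γ
  obtain ⟨δ, hδpos, hδ⟩ := Metric.uniformContinuous_iff.mp
    (CompactSpace.uniformContinuous_of_continuous γ.continuous) μ hμpos
  have hdist_extend : ∀ v w : ℝ, v ∈ Set.Icc (0:ℝ) 1 → w ∈ Set.Icc (0:ℝ) 1 →
      |v - w| < δ → dist (γ.extend v) (γ.extend w) < μ := by
    intro v w hv hw hvw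
    have h1 : γ.extend v = γ (Set.projIcc 0 1 zero_le_one v) := rfl
    have h2 : γ.extend w = γ (Set.projIcc 0 1 zero_le_one w) := rfl
    rw [h1, h2]
    apply hδ
    rw [Subtype.dist_eq, Set.projIcc_of_mem _ hv, Set.projIcc_of_mem _ hw]
    exact hvw
  -- subdivision scale
  obtain ⟨N, hN⟩ := exists_nat_gt (1 / δ)
  have hNpos : 0 < (N:ℝ) := lt_trans (by positivity) hN
  have hstep : 1 / (N:ℝ) < δ := by
    rw [div_lt_iff₀ hNpos]
    have h1 : 1 < (N:ℝ) * δ := by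
      have := (div_lt_iff₀ hδpos).mp hN
      linarith [this]
    linarith [h1]
  -- the key segment-joining step
  have hjoin : ∀ (s t : ℝ) (h0 : 0 ≤ s) (hst : s ≤ t), t ≤ 1 → t - s ≤ 1 / (N:ℝ) →
      ∀ (qs : Path x (γ.extend s)) (qt : Path x (γ.extend t)),
        pathELength qs < ENNReal.ofReal (r + ε) → pathELength qt < ENNReal.ofReal (r + ε) →
        (qs.trans (γ.truncateOfLE hst)).Homotopic qt := by
    intro s t h0 hst h1 hd qs qt hqs hqt
    have hsmem : s ∈ Set.Icc (0:ℝ) 1 := ⟨h0, hst.trans h1⟩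
    have htmem : t ∈ Set.Icc (0:ℝ) 1 := ⟨h0.trans hst, h1⟩
    have hzs_range : γ.extend s ∈ Set.range ⇑γ := ⟨Set.projIcc 0 1 zero_le_one s, rfl⟩
    obtain ⟨w0, hw0⟩ := hlam (γ.extend s) hzs_range
    -- the truncated arc stays near zs
    have harc : Set.range ⇑(γ.truncateOfLE hst) ⊆ Metric.ball (γ.extend s) lam := by
      rintro _ ⟨u, rfl⟩
      rw [truncateOfLE_apply]
      set v : ℝ := min (max ↑u s) t with hv
      have hvs : s ≤ v := le_min (le_max_right _ _) hst
      have hvt : v ≤ t := min_le_right _ _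
      have hvmem : v ∈ Set.Icc (0:ℝ) 1 := ⟨h0.trans hvs, hvt.trans h1⟩
      have : dist (γ.extend v) (γ.extend s) < μ := by
        apply hdist_extend v s hvmem hsmem
        rw [abs_sub_lt_iff]
        constructor
        · linarith [lt_of_le_of_lt (show v - s ≤ 1/(N:ℝ) by linarith) hstep]
        · linarith [hδpos]
      exact Metric.mem_ball.mpr (lt_trans this hμlam)
    -- a short connector from zs to zt
    have hznear : edist (γ.extend s) (γ.extend t) < ENNReal.ofReal μ := by
      rw [edist_dist]
      apply (ENNReal.ofReal_lt_ofReal_iff hμpos).mpr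
      apply hdist_extend s t hsmem htmem
      rw [abs_sub_lt_iff]
      constructor
      · linarith [hδpos]
      · linarith [lt_of_le_of_lt (show t - s ≤ 1/(N:ℝ) by linarith) hstep]
    rw [hflat.length_metric (γ.extend s) (γ.extend t)] at hznear
    obtain ⟨c, hc⟩ := iInf_lt_iff.mp hznear
    have hcrange : Set.range ⇑c ⊆ Metric.ball (γ.extend s) lam := by
      rintro _ ⟨u, rfl⟩
      have h1' : edist (γ.extend s) (c u) ≤ pathELength c := edist_source_le_pathELength c u
      have h2' : edist (γ.extend s) (c u) < ENNReal.ofReal μ := lt_of_le_of_lt h1' hc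
      rw [edist_dist] at h2'
      have := (ENNReal.ofReal_lt_ofReal_iff hμpos).mp
        (lt_of_le_of_lt (ENNReal.ofReal_le_ofReal (le_refl _)) h2')
      rw [Metric.mem_ball, dist_comm]
      exact lt_trans this hμlam
    -- the arc is homotopic to the connector, inside the star
    have harc_c : (γ.truncateOfLE hst).Homotopic c :=
      hUhom w0 (γ.extend s) (γ.extend t) (γ.truncateOfLE hst) c
        (harc.trans hw0) (hcrange.trans hw0)
    -- the conjugated connector loop is short, hence null-homotopic
    have hlen : pathELength ((qs.trans c).trans qt.symm) < ENNReal.ofReal R := by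
      have hb1 : pathELength (qs.trans c) ≤ pathELength qs + pathELength c :=
        pathELength_trans_le qs c
      have hb2 : pathELength ((qs.trans c).trans qt.symm)
          ≤ (pathELength qs + pathELength c) + pathELength qt := by
        refine le_trans (pathELength_trans_le _ _) ?_
        rw [pathELength_symm]
        exact add_le_add hb1 le_rfl
      have hb3 : (pathELength qs + pathELength c) + pathELength qt
          < (ENNReal.ofReal (r + ε) + ENNReal.ofReal μ) + ENNReal.ofReal (r + ε) :=
        ENNReal.add_lt_add (ENNReal.add_lt_add hqs hc) hqt
      refine lt_of_le_of_lt hb2 (lt_of_lt_of_le hb3 ?_)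
      rw [← ENNReal.ofReal_add (by linarith) (by linarith),
        ← ENNReal.ofReal_add (by positivity) (by linarith)]
      apply ENNReal.ofReal_le_ofReal
      linarith [hμε, hεdef.le, hεdef.ge]
    have hnl := hnull _ hlen
    have hqc : (qs.trans c).Homotopic qt := homotopic_of_trans_symm hnl
    exact (Path.Homotopic.hcomp (Path.Homotopic.refl qs) harc_c).trans hqc
  -- the inductive claim along the subdivision
  have hfrac0 : ∀ i : ℕ, (0:ℝ) ≤ (i:ℝ) / (N:ℝ) := by
    intro i; positivity
  have hfrac1 : ∀ i : ℕ, i ≤ N → (i:ℝ) / (N:ℝ) ≤ 1 := by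
    intro i hi
    rw [div_le_one hNpos]
    exact_mod_cast hi
  have main : ∀ i : ℕ, i ≤ N →
      (γ.truncateOfLE (hfrac0 i)).Homotopic
        ((τ (γ.extend ((0:ℝ) : ℝ)) (hin 0)).symm.trans
          (τ (γ.extend ((i:ℝ) / (N:ℝ))) (hin _))) := by
    intro i
    induction i with
    | zero =>
      intro _
      have hst : (0:ℝ) ≤ ((0:ℕ):ℝ) / (N:ℝ) := hfrac0 0
      have hj := hjoin 0 (((0:ℕ):ℝ) / (N:ℝ)) le_rfl hst
        ((hfrac1 0 (Nat.zero_le N))) (by simp)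
        (τ (γ.extend 0) (hin 0)) (τ (γ.extend (((0:ℕ):ℝ) / (N:ℝ))) (hin _))
        (hτ _ _) (hτ _ _)
      exact homotopic_loop_cancel _ _ _ hj
    | succ k ih =>
      intro hk
      have hkN : k ≤ N := Nat.le_of_succ_le hk
      have h0k : (0:ℝ) ≤ (k:ℝ) / (N:ℝ) := hfrac0 k
      have hkk1 : (k:ℝ) / (N:ℝ) ≤ ((k+1:ℕ):ℝ) / (N:ℝ) := by
        gcongr
        exact_mod_cast Nat.le_succ k
      have h1k1 : ((k+1:ℕ):ℝ) / (N:ℝ) ≤ 1 := hfrac1 (k+1) hk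
      have hdk : ((k+1:ℕ):ℝ) / (N:ℝ) - (k:ℝ) / (N:ℝ) ≤ 1 / (N:ℝ) := by
        push_cast
        rw [div_sub_div_same]
        norm_num
      have hsplit := truncate_split γ h0k hkk1 h1k1
      have ihh := ih hkN
      have hstep2 := hjoin ((k:ℝ)/(N:ℝ)) (((k+1:ℕ):ℝ)/(N:ℝ)) h0k hkk1 h1k1 hdk
        (τ (γ.extend ((k:ℝ)/(N:ℝ))) (hin _)) (τ (γ.extend (((k+1:ℕ):ℝ)/(N:ℝ))) (hin _))
        (hτ _ _) (hτ _ _)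
      refine (hsplit.symm).trans ?_
      refine (Path.Homotopic.hcomp ihh (Path.Homotopic.refl (γ.truncateOfLE hkk1))).trans ?_
      refine (homotopic_trans_assoc _ _ _).trans ?_
      exact Path.Homotopic.hcomp (Path.Homotopic.refl _) hstep2
  -- conclusion: cast everything down to a statement about γ itself
  have hC := main N (le_refl N)
  have hNN : ((N:ℕ):ℝ) / (N:ℝ) = 1 := div_self (ne_of_gt hNpos)
  have e0 : γ.extend (0:ℝ) = y := γ.extend_zero
  have e1 : γ.extend (((N:ℕ):ℝ) / (N:ℝ)) = y := by rw [hNN]; exact γ.extend_one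
  have hcast := homotopic_cast e0.symm e1.symm hC
  have hA : (γ.truncateOfLE (hfrac0 N)).cast e0.symm e1.symm = γ := by
    ext u
    show γ.extend (min (max ↑u 0) (((N:ℕ):ℝ) / (N:ℝ))) = γ u
    rw [hNN, max_eq_left u.2.1, min_eq_left u.2.2]
    exact γ.extend_extends' u
  rw [hA, cast_trans _ _ _ _,
    cast_symm (τ (γ.extend (0:ℝ)) (hin 0)) rfl e0.symm] at hcast
  set P0 : Path x y := (τ (γ.extend (0:ℝ)) (hin 0)).cast rfl e0.symm with hP0def
  set PN : Path x y := (τ (γ.extend (((N:ℕ):ℝ) / (N:ℝ))) (hin _)).cast rfl e1.symm with hPNdef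
  have hP0len : pathELength P0 < ENNReal.ofReal (r + ε) := by
    rw [hP0def, pathELength_cast]; exact hτ _ _
  have hPNlen : pathELength PN < ENNReal.ofReal (r + ε) := by
    rw [hPNdef, pathELength_cast]; exact hτ _ _
  have hloop : pathELength (PN.trans P0.symm) < ENNReal.ofReal R := by
    have hb : pathELength (PN.trans P0.symm) ≤ pathELength PN + pathELength P0 := by
      refine le_trans (pathELength_trans_le _ _) ?_
      rw [pathELength_symm]
    have hb2 : pathELength PN + pathELength P0
        < ENNReal.ofReal (r + ε) + ENNReal.ofReal (r + ε) :=
      ENNReal.add_lt_add hPNlen hP0len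
    refine lt_of_le_of_lt hb (lt_of_lt_of_le hb2 ?_)
    rw [← ENNReal.ofReal_add (by linarith) (by linarith)]
    apply ENNReal.ofReal_le_ofReal
    linarith [hεdef.le, hεdef.ge]
  have hPNP0 : PN.Homotopic P0 := homotopic_of_trans_symm (hnull _ hloop)
  have hfin : γ.Homotopic (P0.symm.trans P0) :=
    hcast.trans (Path.Homotopic.hcomp (Path.Homotopic.refl P0.symm) hPNP0)
  exact hfin.trans (homotopic_symm_trans P0)
end

section
/- Let X be a finite simplicial complex equipped with a piecewise flat metric, let x ∈ X be a point with sys(X,x) finite, and let γ: [0,L] → X be a pointed systolic loop at x parametrized by arclength, where L = sys(X,x). Then: (i) dist(x, γ(t)) = t for all t ∈ [0, L/2] and dist(x, γ(t)) = L − t for all t ∈ [L/2, L] (the loop γ is formed of two distance-minimizing arcs of length L/2 from x to its midpoint); (ii) if γ(s) = γ(t) for some 0 ≤ s < t ≤ L with (s,t) ≠ (0,L), then dist(x, γ(s)) ≤ ½·(sys(X,x) − sys(X)). -/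
open Set MeasureTheory Metric
open scoped ENNReal

open Set unitInterval

noncomputable section SysHelpers

namespace SysProof

variable {X : Type*} [TopologicalSpace X] {x y z : X}

/-- The affine map of the unit interval with `0 ↦ a`, `1 ↦ b`. -/
def aff (a b : I) : I → I := fun u =>
  ⟨a.1 + u.1 * (b.1 - a.1), by
    constructor
    · nlinarith [a.2.1, b.2.1, u.2.1, u.2.2, mul_nonneg u.2.1 b.2.1,
        mul_nonneg (sub_nonneg.2 u.2.2) a.2.1]
    · nlinarith [a.2.2, b.2.2, u.2.1, u.2.2, mul_nonneg u.2.1 b.2.1,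
        mul_nonneg (sub_nonneg.2 u.2.2) a.2.1]⟩

lemma aff_coe (a b : I) (u : I) : (aff a b u : ℝ) = a.1 + u.1 * (b.1 - a.1) := rfl

lemma aff_zero (a b : I) : aff a b 0 = a := Subtype.ext (by simp [aff_coe])

lemma aff_one (a b : I) : aff a b 1 = b := Subtype.ext (by simp [aff_coe])

lemma continuous_aff (a b : I) : Continuous (aff a b) := by
  apply Continuous.subtype_mk
  fun_prop

lemma aff_mono {a b : I} (hab : a ≤ b) : Monotone (aff a b) := by
  intro u v huv
  have h1 : (a : ℝ) ≤ b := hab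
  have h2 : (u : ℝ) ≤ v := huv
  show (aff a b u : ℝ) ≤ (aff a b v : ℝ)
  rw [aff_coe, aff_coe]
  nlinarith

lemma aff_image {a b : I} (hab : a ≤ b) : aff a b '' Set.univ = Set.Icc a b := by
  have h1 : (a : ℝ) ≤ b := hab
  ext c
  simp only [Set.image_univ, Set.mem_range, Set.mem_Icc]
  constructor
  · rintro ⟨u, rfl⟩
    constructor
    · show (a : ℝ) ≤ aff a b u
      rw [aff_coe]; nlinarith [u.2.1, u.2.2]
    · show (aff a b u : ℝ) ≤ b
      rw [aff_coe]; nlinarith [u.2.1, u.2.2]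
  · rintro ⟨hac, hcb⟩
    have hac' : (a : ℝ) ≤ c := hac
    have hcb' : (c : ℝ) ≤ b := hcb
    rcases eq_or_lt_of_le h1 with h | h
    · refine ⟨0, Subtype.ext ?_⟩
      rw [aff_coe]
      simp only [Icc.coe_zero, zero_mul, add_zero]
      linarith
    · refine ⟨⟨(c.1 - a.1) / (b.1 - a.1), div_nonneg (by linarith) (by linarith),
        div_le_one_of_le₀ (by linarith) (by linarith)⟩, Subtype.ext ?_⟩
      rw [aff_coe]
      show (a.1 : ℝ) + (c.1 - a.1) / (b.1 - a.1) * (b.1 - a.1) = c.1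
      rw [div_mul_cancel₀ _ (sub_ne_zero.2 (ne_of_gt h))]
      ring

lemma aff_comp (a b u v w : I) :
    aff a b (aff u v w) = aff (aff a b u) (aff a b v) w := by
  apply Subtype.ext
  simp only [aff_coe]
  ring

/-- The restriction of a path to `[a,b]`, affinely reparametrized. -/
def subPath (γ : Path x y) (a b : I) : Path (γ a) (γ b) where
  toFun := ⇑γ ∘ aff a b
  continuous_toFun := γ.continuous.comp (continuous_aff a b)
  source' := by show γ (aff a b 0) = γ a; rw [aff_zero]
  target' := by show γ (aff a b 1) = γ b; rw [aff_one]

lemma subPath_coe (γ : Path x y) (a b : I) : ⇑(subPath γ a b) = ⇑γ ∘ aff a b := rfl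

section Metric
variable {Y : Type*} [PseudoEMetricSpace Y] {x y z : Y}

lemma pathELength_congr {x' y' : Y} {p : Path x y} {q : Path x' y'}
    (h : ⇑p = ⇑q) : pathELength p = pathELength q := by
  unfold pathELength
  rw [h]

lemma pathELength_subPath (γ : Path x y) {a b : I} (hab : a ≤ b) :
    pathELength (subPath γ a b) = eVariationOn ⇑γ (Set.Icc a b) := by
  unfold pathELength
  rw [subPath_coe, eVariationOn.comp_eq_of_monotoneOn _ _ ((aff_mono hab).monotoneOn _),
    aff_image hab]

lemma pathELength_symm (p : Path x y) :
    pathELength p.symm = pathELength p := by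
  unfold pathELength
  have h : ⇑p.symm = ⇑p ∘ σ := rfl
  rw [h, eVariationOn.comp_eq_of_antitoneOn _ _ (fun u _ v _ huv => symm_le_symm.2 huv),
    Set.image_univ_of_surjective symm_bijective.surjective]

/-- one half, as an element of the unit interval. -/
def half : I := ⟨1 / 2, by norm_num⟩

lemma Icc_zero_one : (Set.Icc (0 : I) 1) = Set.univ :=
  Set.eq_univ_of_forall fun t => ⟨nonneg', le_one'⟩

lemma pathELength_trans_le (p : Path x y) (q : Path y z) :
    pathELength (p.trans q) ≤ pathELength p + pathELength q := by
  unfold pathELength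
  have key := eVariationOn.Icc_add_Icc (⇑(p.trans q)) (s := (Set.univ : Set I))
    (a := 0) (b := half) (c := 1) (by norm_num [half, Subtype.mk_le_mk]) le_one'
    (Set.mem_univ _)
  simp only [Set.univ_inter, Icc_zero_one] at key
  rw [← key]
  gcongr
  · -- first half
    set ψ : I → I := fun u => ⟨min (2 * u.1) 1, ⟨le_min (by nlinarith [u.2.1]) one_pos.le,
      min_le_right _ _⟩⟩ with hψ
    have heq : Set.EqOn (⇑(p.trans q)) (⇑p ∘ ψ) (Set.Icc 0 half) := by
      intro u hu
      have hu2 : (u : ℝ) ≤ 1 / 2 := hu.2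
      rw [Path.trans_apply, dif_pos hu2]
      show p _ = p (ψ u)
      congr 1
      apply Subtype.ext
      show (2 * u.1 : ℝ) = min (2 * u.1) 1
      rw [min_eq_left (by linarith)]
    rw [eVariationOn.eq_of_eqOn heq]
    exact eVariationOn.comp_le_of_monotoneOn _ _
      (fun u _ v _ huv => Subtype.mk_le_mk.2 (min_le_min
        (by have := Subtype.coe_le_coe.2 huv; linarith) le_rfl))
      (Set.mapsTo_univ _ _)
  · -- second half
    set ψ : I → I := fun u => ⟨max (2 * u.1 - 1) 0, ⟨le_max_right _ _,
      max_le (by nlinarith [u.2.2]) one_pos.le⟩⟩ with hψ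
    have heq : Set.EqOn (⇑(p.trans q)) (⇑q ∘ ψ) (Set.Icc half 1) := by
      intro u hu
      have hu2 : (1 : ℝ) / 2 ≤ u := hu.1
      rw [Path.trans_apply]
      split_ifs with h
      · have hu3 : (u : ℝ) = 1 / 2 := le_antisymm h hu2
        have h1 : p ⟨2 * u.1, (mul_pos_mem_iff zero_lt_two).2 ⟨u.2.1, h⟩⟩ = p 1 := by
          congr 1
          apply Subtype.ext
          show (2 * u.1 : ℝ) = 1
          rw [hu3]; norm_num
        rw [h1, p.target]
        show y = q (ψ u)
        have h2 : ψ u = 0 := by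
          apply Subtype.ext
          show max (2 * u.1 - 1) 0 = ((0 : I) : ℝ)
          rw [hu3]; norm_num
        rw [h2, q.source]
      · show q _ = q (ψ u)
        congr 1
        apply Subtype.ext
        show (2 * u.1 - 1 : ℝ) = max (2 * u.1 - 1) 0
        rw [max_eq_left (by push_neg at h; linarith)]
    rw [eVariationOn.eq_of_eqOn heq]
    exact eVariationOn.comp_le_of_monotoneOn _ _
      (fun u _ v _ huv => Subtype.mk_le_mk.2 (max_le_max
        (by have := Subtype.coe_le_coe.2 huv; linarith) le_rfl))
      (Set.mapsTo_univ _ _)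

end Metric

/-- Initial segment of a path up to time `a`. -/
def firstPart (γ : Path x y) (a : I) : Path x (γ a) :=
  (subPath γ 0 a).cast γ.source.symm rfl

/-- Final segment of a path from time `a` on. -/
def lastPart (γ : Path x y) (a : I) : Path (γ a) y :=
  (subPath γ a 1).cast rfl γ.target.symm

lemma firstPart_coe (γ : Path x y) (a : I) : ⇑(firstPart γ a) = ⇑γ ∘ aff 0 a :=
  Path.cast_coe _ _ _

lemma lastPart_coe (γ : Path x y) (a : I) : ⇑(lastPart γ a) = ⇑γ ∘ aff a 1 :=
  Path.cast_coe _ _ _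

/-- Every path is homotopic to the concatenation of its two pieces at any splitting time. -/
lemma split_homotopic (γ : Path x y) (a : I) :
    γ.Homotopic ((firstPart γ a).trans (lastPart γ a)) := by
  have hmem : ∀ u : I, a.1 * min (2 * u.1) 1 + (1 - a.1) * max (2 * u.1 - 1) 0 ∈ I := by
    intro u
    have h1 : (0 : ℝ) ≤ min (2 * u.1) 1 := le_min (by nlinarith [u.2.1]) one_pos.le
    have h2 : min (2 * u.1) 1 ≤ 1 := min_le_right _ _
    have h3 : (0 : ℝ) ≤ max (2 * u.1 - 1) 0 := le_max_right _ _
    have h4 : max (2 * u.1 - 1) 0 ≤ 1 := max_le (by nlinarith [u.2.2]) one_pos.le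
    constructor
    · nlinarith [a.2.1, a.2.2]
    · nlinarith [a.2.1, a.2.2]
  set φ : I → I := fun u => ⟨a.1 * min (2 * u.1) 1 + (1 - a.1) * max (2 * u.1 - 1) 0, hmem u⟩
    with hφdef
  have hφ : Continuous φ := by
    apply Continuous.subtype_mk
    fun_prop
  have hφ0 : φ 0 = 0 := by
    apply Subtype.ext
    show a.1 * min (2 * ((0:I):ℝ)) 1 + (1 - a.1) * max (2 * ((0:I):ℝ) - 1) 0 = ((0:I):ℝ)
    norm_num
  have hφ1 : φ 1 = 1 := by
    apply Subtype.ext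
    show a.1 * min (2 * ((1:I):ℝ)) 1 + (1 - a.1) * max (2 * ((1:I):ℝ) - 1) 0 = ((1:I):ℝ)
    norm_num
  have heq : (firstPart γ a).trans (lastPart γ a) = γ.reparam φ hφ hφ0 hφ1 := by
    ext u
    rw [Path.trans_apply]
    split_ifs with h
    · show (firstPart γ a) _ = γ (φ u)
      rw [firstPart_coe]
      show γ (aff 0 a _) = γ (φ u)
      congr 1
      apply Subtype.ext
      show (0 : ℝ) + (2 * u.1) * (a.1 - 0) = a.1 * min (2 * u.1) 1 + (1 - a.1) * max (2 * u.1 - 1) 0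
      rw [min_eq_left (by linarith), max_eq_right (by linarith)]
      ring
    · show (lastPart γ a) _ = γ (φ u)
      rw [lastPart_coe]
      show γ (aff a 1 _) = γ (φ u)
      congr 1
      apply Subtype.ext
      push_neg at h
      show a.1 + (2 * u.1 - 1) * (1 - a.1) = a.1 * min (2 * u.1) 1 + (1 - a.1) * max (2 * u.1 - 1) 0
      rw [min_eq_right (by linarith), max_eq_left (by linarith)]
      ring
  exact ⟨(Path.Homotopy.reparam γ φ hφ hφ0 hφ1).cast rfl heq.symm⟩

/-- If a loop factors through a shortcut `σ` in the middle, contractibility of both halves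
gives contractibility of the whole. -/
lemma contract_of_parts (p : Path x y) (q : Path y x) (s : Path x y)
    (h1 : (p.trans s.symm).Homotopic (Path.refl x))
    (h2 : (s.trans q).Homotopic (Path.refl x)) :
    (p.trans q).Homotopic (Path.refl x) := by
  have assoc1 : ((p.trans s.symm).trans (s.trans q)).Homotopic
      (p.trans (s.symm.trans (s.trans q))) := ⟨Path.Homotopy.transAssoc _ _ _⟩
  have step : (s.symm.trans (s.trans q)).Homotopic q := by
    have ha : ((s.symm.trans s).trans q).Homotopic (s.symm.trans (s.trans q)) :=
      ⟨Path.Homotopy.transAssoc _ _ _⟩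
    refine ha.symm.trans ?_
    have h3 : (s.symm.trans s).Homotopic (Path.refl y) := ⟨(Path.Homotopy.reflSymmTrans s).symm⟩
    exact (Path.Homotopic.hcomp h3 (Path.Homotopic.refl q)).trans ⟨Path.Homotopy.reflTrans q⟩
  have main : (p.trans q).Homotopic ((p.trans s.symm).trans (s.trans q)) :=
    (Path.Homotopic.hcomp (Path.Homotopic.refl p) step.symm).trans assoc1.symm
  have fin : ((p.trans s.symm).trans (s.trans q)).Homotopic (Path.refl x) :=
    (Path.Homotopic.hcomp h1 h2).trans ⟨Path.Homotopy.reflTrans (Path.refl x)⟩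
  exact main.trans fin

lemma psystole_le {Y : Type*} [MetricSpace Y] {x : Y} (p : Path x x)
    (h : ¬ p.Homotopic (Path.refl x)) : psystole Y x ≤ pathELength p :=
  iInf₂_le p h

lemma exists_short {Y : Type*} [MetricSpace Y] (hlm : IsLengthMetric Y) {x y : Y} {c : ℝ≥0∞}
    (h : edist x y < c) : ∃ s : Path x y, pathELength s < c := by
  rw [hlm x y] at h
  exact iInf_lt_iff.1 h

end SysProof

end SysHelpers
/-- Structure of a pointed systolic loop `γ` at `x` of length
`L = sys(X,x)`, parametrized (on `[0,1]`, proportionally) by arclength: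
(i) `γ` consists of two distance-minimizing arcs of length `L/2`, i.e.
`dist x (γ t) = L·t` for `t ≤ 1/2` and `dist x (γ t) = L·(1−t)` for `t ≥ 1/2`;
(ii) any self-intersection point of `γ` is at distance at most `(sys(X,x) − sys(X))/2`
from `x`. -/
theorem pointed_systolic_loop_structure
    (K : FinComplex) [MetricSpace K.space] (hflat : IsPiecewiseFlat K)
    (x : K.space) (hfin : psystole K.space x ≠ ⊤)
    (γ : Path x x) (hnc : ¬ γ.Homotopic (Path.refl x))
    (hlen : pathELength γ = psystole K.space x)
    (hparam : ∀ s t : unitInterval, s ≤ t →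
      eVariationOn (⇑γ) (Set.Icc s t)
        = ENNReal.ofReal (psysR K.space x * ((t : ℝ) - (s : ℝ)))) :
    (∀ t : unitInterval, (t : ℝ) ≤ 1 / 2 → dist x (γ t) = psysR K.space x * (t : ℝ)) ∧
    (∀ t : unitInterval, 1 / 2 ≤ (t : ℝ) → dist x (γ t) = psysR K.space x * (1 - (t : ℝ))) ∧
    (∀ s t : unitInterval, (s : ℝ) < (t : ℝ) → ¬((s : ℝ) = 0 ∧ (t : ℝ) = 1) →
      γ s = γ t → dist x (γ s) ≤ (psysR K.space x - sysR K.space) / 2) := by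
  classical
  set L : ℝ := psysR K.space x with hLdef
  have hL0 : 0 ≤ L := ENNReal.toReal_nonneg
  have hLof : psystole K.space x = ENNReal.ofReal L := (ENNReal.ofReal_toReal hfin).symm
  have h00 : ((0 : unitInterval) : ℝ) = 0 := rfl
  have h11 : ((1 : unitInterval) : ℝ) = 1 := rfl
  have minpos : ∀ u : unitInterval, 0 ≤ min u.1 (1 - u.1) :=
    fun u => le_min u.2.1 (by linarith [u.2.2])
  have lenfirst : ∀ u : unitInterval,
      pathELength (SysProof.firstPart γ u) = ENNReal.ofReal (L * u.1) := by
    intro u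
    have hc : ⇑(SysProof.firstPart γ u) = ⇑(SysProof.subPath γ 0 u) :=
      (SysProof.firstPart_coe γ u).trans (SysProof.subPath_coe γ 0 u).symm
    rw [SysProof.pathELength_congr hc, SysProof.pathELength_subPath γ unitInterval.nonneg',
      hparam 0 u unitInterval.nonneg', h00, sub_zero]
  have lenlast : ∀ u : unitInterval,
      pathELength (SysProof.lastPart γ u) = ENNReal.ofReal (L * (1 - u.1)) := by
    intro u
    have hc : ⇑(SysProof.lastPart γ u) = ⇑(SysProof.subPath γ u 1) :=
      (SysProof.lastPart_coe γ u).trans (SysProof.subPath_coe γ u 1).symm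
    rw [SysProof.pathELength_congr hc, SysProof.pathELength_subPath γ unitInterval.le_one',
      hparam u 1 unitInterval.le_one', h11]
  have key : ∀ u : unitInterval, edist x (γ u) = ENNReal.ofReal (L * min u.1 (1 - u.1)) := by
    intro u
    have hup1 : edist x (γ u) ≤ ENNReal.ofReal (L * u.1) := by
      have h0m : (0 : unitInterval) ∈ Set.Icc (0 : unitInterval) u := ⟨le_rfl, unitInterval.nonneg'⟩
      have hum : u ∈ Set.Icc (0 : unitInterval) u := ⟨unitInterval.nonneg', le_rfl⟩
      have h := eVariationOn.edist_le ⇑γ h0m hum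
      rw [γ.source, hparam 0 u unitInterval.nonneg', h00, sub_zero] at h
      exact h
    have hup2 : edist x (γ u) ≤ ENNReal.ofReal (L * (1 - u.1)) := by
      have hum : u ∈ Set.Icc u (1 : unitInterval) := ⟨le_rfl, unitInterval.le_one'⟩
      have h1m : (1 : unitInterval) ∈ Set.Icc u (1 : unitInterval) := ⟨unitInterval.le_one', le_rfl⟩
      have h := eVariationOn.edist_le ⇑γ hum h1m
      rw [γ.target, hparam u 1 unitInterval.le_one', h11] at h
      rw [edist_comm]
      exact h
    refine le_antisymm ?_ (not_lt.1 fun hlt => ?_)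
    · rcases le_total u.1 (1 - u.1) with h | h
      · rw [min_eq_left h]; exact hup1
      · rw [min_eq_right h]; exact hup2
    · obtain ⟨sp, hsp⟩ := SysProof.exists_short hflat.length_metric hlt
      have hAlt : pathELength ((SysProof.firstPart γ u).trans sp.symm) < psystole K.space x := by
        calc pathELength ((SysProof.firstPart γ u).trans sp.symm)
            ≤ pathELength (SysProof.firstPart γ u) + pathELength sp.symm :=
              SysProof.pathELength_trans_le _ _
          _ = ENNReal.ofReal (L * u.1) + pathELength sp := by
              rw [lenfirst u, SysProof.pathELength_symm]
          _ < ENNReal.ofReal (L * u.1) + ENNReal.ofReal (L * min u.1 (1 - u.1)) :=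
              ENNReal.add_lt_add_left ENNReal.ofReal_ne_top hsp
          _ ≤ ENNReal.ofReal L := by
              rw [← ENNReal.ofReal_add (mul_nonneg hL0 u.2.1) (mul_nonneg hL0 (minpos u))]
              apply ENNReal.ofReal_le_ofReal
              nlinarith [mul_le_mul_of_nonneg_left (min_le_right u.1 (1 - u.1)) hL0]
          _ = psystole K.space x := hLof.symm
      have hBlt : pathELength (sp.trans (SysProof.lastPart γ u)) < psystole K.space x := by
        calc pathELength (sp.trans (SysProof.lastPart γ u))
            ≤ pathELength sp + pathELength (SysProof.lastPart γ u) :=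
              SysProof.pathELength_trans_le _ _
          _ < ENNReal.ofReal (L * min u.1 (1 - u.1)) + pathELength (SysProof.lastPart γ u) :=
              ENNReal.add_lt_add_right (by rw [lenlast u]; exact ENNReal.ofReal_ne_top) hsp
          _ = ENNReal.ofReal (L * min u.1 (1 - u.1)) + ENNReal.ofReal (L * (1 - u.1)) := by
              rw [lenlast u]
          _ ≤ ENNReal.ofReal L := by
              rw [← ENNReal.ofReal_add (mul_nonneg hL0 (minpos u))
                (mul_nonneg hL0 (by linarith [u.2.2]))]
              apply ENNReal.ofReal_le_ofReal
              nlinarith [mul_le_mul_of_nonneg_left (min_le_left u.1 (1 - u.1)) hL0]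
          _ = psystole K.space x := hLof.symm
      have hAc : ((SysProof.firstPart γ u).trans sp.symm).Homotopic (Path.refl x) := by
        by_contra hcn
        exact absurd (SysProof.psystole_le _ hcn) (not_le.2 hAlt)
      have hBc : (sp.trans (SysProof.lastPart γ u)).Homotopic (Path.refl x) := by
        by_contra hcn
        exact absurd (SysProof.psystole_le _ hcn) (not_le.2 hBlt)
      exact hnc ((SysProof.split_homotopic γ u).trans
        (SysProof.contract_of_parts _ _ sp hAc hBc))
  have keyd : ∀ u : unitInterval, dist x (γ u) = L * min u.1 (1 - u.1) := by
    intro u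
    rw [dist_edist, key u, ENNReal.toReal_ofReal (mul_nonneg hL0 (minpos u))]
  refine ⟨fun t ht => ?_, fun t ht => ?_, fun s t hst hne heq => ?_⟩
  · rw [keyd t, min_eq_left (by linarith [t.2.2])]
  · rw [keyd t, min_eq_right (by linarith [t.2.1])]
  · -- part (ii)
    have hLpos : 0 < L := by
      refine ENNReal.toReal_pos (fun h0 => ?_) hfin
      have hlen0 : eVariationOn ⇑γ Set.univ = 0 := by
        have := hlen; rw [h0] at this; exact this
      have hconst : ∀ u : unitInterval, γ u = x := by
        intro u
        have h := eVariationOn.edist_le ⇑γ (Set.mem_univ (0 : unitInterval)) (Set.mem_univ u)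
        rw [hlen0] at h
        have h2 : γ 0 = γ u := edist_eq_zero.1 (le_antisymm h zero_le)
        rw [γ.source] at h2
        exact h2.symm
      apply hnc
      have hγr : γ = Path.refl x := by
        ext u
        simp [hconst u]
      rw [hγr]
    have hstle : s ≤ t := Subtype.coe_le_coe.1 hst.le
    have hmin : min s.1 (1 - s.1) = min t.1 (1 - t.1) :=
      mul_left_cancel₀ (ne_of_gt hLpos) (by rw [← keyd s, ← keyd t, heq])
    have hs1 : s.1 = 1 - t.1 := by
      rcases le_total s.1 (1 - s.1) with h | h <;> rcases le_total t.1 (1 - t.1) with h' | h'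
      · rw [min_eq_left h, min_eq_left h'] at hmin; linarith
      · rw [min_eq_left h, min_eq_right h'] at hmin; linarith
      · rw [min_eq_right h, min_eq_left h'] at hmin; linarith
      · rw [min_eq_right h, min_eq_right h'] at hmin; linarith
    have hs2 : s.1 < 1 / 2 := by linarith
    have hs3 : 0 < s.1 := by
      rcases eq_or_lt_of_le s.2.1 with h | h
      · exact absurd ⟨h.symm, by linarith⟩ hne
      · exact h
    have h1s : (0 : ℝ) < 1 - s.1 := by linarith
    set u₀ : unitInterval := ⟨(t.1 - s.1) / (1 - s.1),
      div_nonneg (by linarith) h1s.le,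
      div_le_one_of_le₀ (by linarith [t.2.2]) h1s.le⟩ with hu₀def
    have ht' : SysProof.aff s 1 u₀ = t := by
      apply Subtype.ext
      rw [SysProof.aff_coe, h11]
      show s.1 + (t.1 - s.1) / (1 - s.1) * (1 - s.1) = t.1
      rw [div_mul_cancel₀ _ (ne_of_gt h1s)]
      ring
    have hBu : SysProof.lastPart γ s u₀ = γ t := by
      have : SysProof.lastPart γ s u₀ = γ (SysProof.aff s 1 u₀) :=
        congrFun (SysProof.lastPart_coe γ s) u₀
      rw [this, ht']
    have e : γ s = SysProof.lastPart γ s u₀ := (hBu.trans heq.symm).symm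
    set B : Path (γ s) x := SysProof.lastPart γ s with hBdef
    set β : Path (γ s) (γ s) := (SysProof.firstPart B u₀).cast rfl e with hβdef
    set ρ : Path (γ s) x := (SysProof.lastPart B u₀).cast e rfl with hρdef
    have hβcoe : ⇑β = ⇑(SysProof.subPath γ s t) := by
      funext w
      show γ (SysProof.aff s 1 (SysProof.aff 0 u₀ w)) = γ (SysProof.aff s t w)
      rw [SysProof.aff_comp, SysProof.aff_zero, ht']
    have hρcoe : ⇑ρ = ⇑(SysProof.subPath γ t 1) := by
      funext w
      show γ (SysProof.aff s 1 (SysProof.aff u₀ 1 w)) = γ (SysProof.aff t 1 w)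
      rw [SysProof.aff_comp, SysProof.aff_one, ht']
    have lenβ : pathELength β = ENNReal.ofReal (L * (t.1 - s.1)) := by
      rw [SysProof.pathELength_congr hβcoe, SysProof.pathELength_subPath γ hstle,
        hparam s t hstle]
    have lenρ : pathELength ρ = ENNReal.ofReal (L * (1 - t.1)) := by
      rw [SysProof.pathELength_congr hρcoe, SysProof.pathELength_subPath γ unitInterval.le_one',
        hparam t 1 unitInterval.le_one', h11]
    have htreq : β.trans ρ = (SysProof.firstPart B u₀).trans (SysProof.lastPart B u₀) := by
      ext w
      rw [Path.trans_apply, Path.trans_apply]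
      split_ifs <;> rfl
    have hdecomp : γ.Homotopic ((SysProof.firstPart γ s).trans (β.trans ρ)) := by
      rw [htreq]
      exact (SysProof.split_homotopic γ s).trans
        (Path.Homotopic.hcomp (Path.Homotopic.refl _) (SysProof.split_homotopic B u₀))
    by_cases hβc : β.Homotopic (Path.refl (γ s))
    · exfalso
      have hstep : (β.trans ρ).Homotopic ρ :=
        (Path.Homotopic.hcomp hβc (Path.Homotopic.refl ρ)).trans ⟨Path.Homotopy.reflTrans ρ⟩
      have hγα : γ.Homotopic ((SysProof.firstPart γ s).trans ρ) :=
        hdecomp.trans (Path.Homotopic.hcomp (Path.Homotopic.refl _) hstep)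
      have hαnc : ¬ ((SysProof.firstPart γ s).trans ρ).Homotopic (Path.refl x) :=
        fun h => hnc (hγα.trans h)
      have hlen2 : pathELength ((SysProof.firstPart γ s).trans ρ) < psystole K.space x := by
        calc pathELength ((SysProof.firstPart γ s).trans ρ)
            ≤ pathELength (SysProof.firstPart γ s) + pathELength ρ :=
              SysProof.pathELength_trans_le _ _
          _ = ENNReal.ofReal (L * s.1) + ENNReal.ofReal (L * (1 - t.1)) := by
              rw [lenfirst s, lenρ]
          _ < ENNReal.ofReal L := by
              rw [← ENNReal.ofReal_add (mul_nonneg hL0 s.2.1)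
                (mul_nonneg hL0 (by linarith [t.2.2]))]
              refine (ENNReal.ofReal_lt_ofReal_iff hLpos).2 ?_
              nlinarith
          _ = psystole K.space x := hLof.symm
      exact absurd (SysProof.psystole_le _ hαnc) (not_le.2 hlen2)
    · have hsys : systole K.space ≤ ENNReal.ofReal (L * (t.1 - s.1)) := by
        rw [← lenβ]
        exact le_trans (iInf_le _ (γ s)) (SysProof.psystole_le β hβc)
      have hsysR : sysR K.space ≤ L * (t.1 - s.1) :=
        ENNReal.toReal_le_of_le_ofReal (mul_nonneg hL0 (by linarith)) hsys
      rw [keyd s, min_eq_left (by linarith)]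
      nlinarith [hsysR]
end

section
/- Fix real numbers δ ∈ (0, 1/2) and λ > 0. Let ℓ: [0, 1/2] → ℝ be a function that is continuous outside a finite set of points, nonnegative on [0, δ], and positive on (δ, 1/2), and set a(r) = ∫₀^r ℓ(s) ds. If a(r) ≤ λ·ℓ(r)² for every r ∈ (δ, 1/2), then a(r) ≥ (r − δ)²/(4λ) for every r ∈ (δ, 1/2). -/
open Set MeasureTheory Metric
open scoped ENNReal

/-- monotonicity from nonnegative derivative off a finite set -/
lemma mono_aux_finset (T : Finset ℝ) : ∀ (f : ℝ → ℝ) (a b : ℝ), a ≤ b →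
    ContinuousOn f (Set.Icc a b) →
    (∀ x ∈ Set.Ioo a b, x ∉ T → ∃ d, 0 ≤ d ∧ HasDerivAt f d x) → f a ≤ f b := by
  classical
  induction T using Finset.induction_on with
  | empty =>
    intro f a b hab hcont hderiv
    have hmono : MonotoneOn f (Set.Icc a b) := by
      apply monotoneOn_of_hasDerivWithinAt_nonneg (f' := fun x =>
        if h : x ∈ Set.Ioo a b then (hderiv x h (by simp)).choose else 0)
        (convex_Icc a b) hcont
      · intro x hx
        rw [interior_Icc] at hx
        simp only [hx, dif_pos]
        exact (hderiv x hx (by simp)).choose_spec.2.hasDerivWithinAt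
      · intro x hx
        rw [interior_Icc] at hx
        simp only [hx, dif_pos]
        exact (hderiv x hx (by simp)).choose_spec.1
    exact hmono (Set.left_mem_Icc.2 hab) (Set.right_mem_Icc.2 hab) hab
  | @insert c T hc IH =>
    intro f a b hab hcont hderiv
    by_cases hcab : c ∈ Set.Ioo a b
    · have h1 : f a ≤ f c := by
        refine IH f a c hcab.1.le (hcont.mono (Set.Icc_subset_Icc le_rfl hcab.2.le)) ?_
        intro x hx hxT
        refine hderiv x ⟨hx.1, hx.2.trans hcab.2⟩ ?_
        simp only [Finset.mem_insert, not_or]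
        exact ⟨ne_of_lt hx.2, hxT⟩
      have h2 : f c ≤ f b := by
        refine IH f c b hcab.2.le (hcont.mono (Set.Icc_subset_Icc hcab.1.le le_rfl)) ?_
        intro x hx hxT
        refine hderiv x ⟨hcab.1.trans hx.1, hx.2⟩ ?_
        simp only [Finset.mem_insert, not_or]
        exact ⟨(ne_of_gt hx.1), hxT⟩
      exact h1.trans h2
    · refine IH f a b hab hcont ?_
      intro x hx hxT
      refine hderiv x hx ?_
      simp only [Finset.mem_insert, not_or]
      exact ⟨fun h => hcab (h ▸ hx), hxT⟩



/-- An integral–differential inequality: if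
`a(r) = ∫₀ʳ ℓ(s) ds ≤ λ·ℓ(r)²` for all `r ∈ (δ, 1/2)`, where `ℓ` is continuous outside a
finite set, nonnegative on `[0, δ]` and positive on `(δ, 1/2)`, then
`a(r) ≥ (r − δ)²/(4λ)` for every `r ∈ (δ, 1/2)`. -/
theorem integral_inequality_lemma
    (δ lam : ℝ) (hδ : δ ∈ Set.Ioo 0 (1 / 2)) (hlam : 0 < lam)
    (l : ℝ → ℝ)
    (hcont : ∃ T : Finset ℝ, ContinuousOn l (Set.Icc 0 (1 / 2) \ (T : Set ℝ)))
    (hnn : ∀ s ∈ Set.Icc 0 δ, 0 ≤ l s)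
    (hpos : ∀ s ∈ Set.Ioo δ (1 / 2), 0 < l s)
    (hyp : ∀ r ∈ Set.Ioo δ (1 / 2),
      (∫⁻ s in Set.Icc 0 r, ENNReal.ofReal (l s)) ≤ ENNReal.ofReal (lam * l r ^ 2)) :
    ∀ r ∈ Set.Ioo δ (1 / 2),
      ENNReal.ofReal ((r - δ) ^ 2 / (4 * lam))
        ≤ ∫⁻ s in Set.Icc 0 r, ENNReal.ofReal (l s) := by
  obtain ⟨T, hcont⟩ := hcont
  intro r hr
  have h0δ : (0:ℝ) < δ := hδ.1
  set r' : ℝ := (r + 1/2) / 2 with hr'def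
  have hrr' : r < r' := by rw [hr'def]; linarith [hr.2]
  have hr'half : r' < 1/2 := by rw [hr'def]; linarith [hr.2]
  have hδr' : δ < r' := lt_trans hr.1 hrr'
  have hr'mem : r' ∈ Set.Ioo δ (1/2) := ⟨hδr', hr'half⟩
  -- nonnegativity of l on [0, r']
  have hl0 : ∀ s ∈ Set.Icc 0 r', 0 ≤ l s := by
    intro s hs
    rcases le_or_gt s δ with h | h
    · exact hnn s ⟨hs.1, h⟩
    · exact (hpos s ⟨h, lt_of_le_of_lt hs.2 hr'half⟩).le
  -- measurability
  have hTnull : (volume : Measure ℝ) (T : Set ℝ) = 0 := (T.finite_toSet).measure_zero _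
  have hmeasIcc : AEStronglyMeasurable l (volume.restrict (Set.Icc 0 (1/2))) := by
    have h1 : AEStronglyMeasurable l (volume.restrict (Set.Icc 0 (1/2) \ (T : Set ℝ))) :=
      hcont.aestronglyMeasurable (measurableSet_Icc.diff T.finite_toSet.measurableSet)
    have h2 : volume.restrict (Set.Icc 0 (1/2) \ (T : Set ℝ))
        = volume.restrict (Set.Icc 0 (1/2)) :=
      Measure.restrict_congr_set
        ((diff_ae_eq_self).2 (measure_mono_null (Set.inter_subset_right) hTnull))
    rwa [h2] at h1
  have hfin : (∫⁻ s in Set.Icc 0 r', ENNReal.ofReal (l s)) < ⊤ :=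
    lt_of_le_of_lt (hyp r' hr'mem) ENNReal.ofReal_lt_top
  have hnn_ae : ∀ t : ℝ, t ≤ r' → 0 ≤ᵐ[volume.restrict (Set.Icc 0 t)] l := by
    intro t ht
    filter_upwards [ae_restrict_mem measurableSet_Icc] with s hs
    exact hl0 s ⟨hs.1, hs.2.trans ht⟩
  have hIntOn : IntegrableOn l (Set.Icc 0 r') := by
    constructor
    · exact hmeasIcc.mono_measure
        (Measure.restrict_mono (Set.Icc_subset_Icc le_rfl hr'half.le) le_rfl)
    · rw [hasFiniteIntegral_iff_ofReal (hnn_ae r' le_rfl)]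
      exact hfin
  have hIIgen : ∀ u v : ℝ, 0 ≤ u → v ≤ r' → u ≤ v → IntervalIntegrable l volume u v := by
    intro u v hu hv huv
    have h : IntegrableOn l (Set.uIcc u v) := by
      rw [Set.uIcc_of_le huv]
      exact hIntOn.mono_set (Set.Icc_subset_Icc hu hv)
    exact h.intervalIntegrable
  set A : ℝ → ℝ := fun t => ∫ s in (0:ℝ)..t, l s with hAdef
  have hconv : ∀ t : ℝ, 0 ≤ t → t ≤ r' →
      (∫⁻ s in Set.Icc 0 t, ENNReal.ofReal (l s)) = ENNReal.ofReal (A t) := by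
    intro t h0 ht
    rw [hAdef]
    simp only []
    rw [intervalIntegral.integral_of_le h0, ← integral_Icc_eq_integral_Ioc,
      ← ofReal_integral_eq_lintegral_ofReal
        (hIntOn.mono_set (Set.Icc_subset_Icc le_rfl ht)) (hnn_ae t ht)]
  -- hypothesis in real form
  have hA_le : ∀ t, t ∈ Set.Ioo δ (1/2) → t ≤ r' → A t ≤ lam * l t ^ 2 := by
    intro t ht htr'
    have h0t : (0:ℝ) ≤ t := (h0δ.trans ht.1).le
    have h := hyp t ht
    rw [hconv t h0t htr'] at h
    exact (ENNReal.ofReal_le_ofReal_iff (by positivity)).1 h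
  -- positivity of A
  have hApos : ∀ t, t ∈ Set.Ioo δ r' → 0 < A t := by
    intro t ht
    have h0t : (0:ℝ) ≤ t := (h0δ.trans ht.1).le
    have h1 : (∫ s in (0:ℝ)..δ, l s) + ∫ s in δ..t, l s = A t :=
      intervalIntegral.integral_add_adjacent_intervals
        (hIIgen 0 δ le_rfl hδr'.le h0δ.le) (hIIgen δ t h0δ.le ht.2.le ht.1.le)
    have h2 : 0 ≤ ∫ s in (0:ℝ)..δ, l s :=
      intervalIntegral.integral_nonneg h0δ.le (fun u hu => hnn u hu)
    have h3 : 0 < ∫ s in δ..t, l s :=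
      intervalIntegral.intervalIntegral_pos_of_pos_on
        (hIIgen δ t h0δ.le ht.2.le ht.1.le)
        (fun x hx => hpos x ⟨hx.1, hx.2.trans (ht.2.trans_le hr'half.le)⟩) ht.1
    linarith
  -- continuity of A
  have hAcont : ContinuousOn A (Set.Icc 0 r') := by
    have h := intervalIntegral.continuousOn_primitive_interval (μ := volume)
      (a := (0:ℝ)) (b := r') (f := l) (by rw [Set.uIcc_of_le (h0δ.le.trans hδr'.le)]; exact hIntOn)
    rwa [Set.uIcc_of_le (h0δ.le.trans hδr'.le)] at h
  -- derivative of A outside T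
  have hopenset : IsOpen (Set.Ioo (0:ℝ) (1/2) \ (T : Set ℝ)) :=
    isOpen_Ioo.sdiff T.finite_toSet.isClosed
  have hAderiv : ∀ x ∈ Set.Ioo δ r, x ∉ T → HasDerivAt A (l x) x := by
    intro x hx hxT
    have hxm : x ∈ Set.Ioo (0:ℝ) (1/2) \ (T : Set ℝ) :=
      ⟨⟨h0δ.trans hx.1, (hx.2.trans hrr').trans hr'half⟩, hxT⟩
    have hnhds : Set.Icc 0 (1/2) \ (T : Set ℝ) ∈ nhds x :=
      mem_nhds_iff.2 ⟨_, Set.diff_subset_diff_left Set.Ioo_subset_Icc_self, hopenset, hxm⟩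
    exact intervalIntegral.integral_hasDerivAt_right
      (hIIgen 0 x le_rfl (hx.2.trans hrr').le (h0δ.trans hx.1).le)
      ⟨_, hnhds, hcont.aestronglyMeasurable
        (measurableSet_Icc.diff T.finite_toSet.measurableSet)⟩
      (hcont.continuousAt hnhds)
  have hsl : 0 < Real.sqrt lam := Real.sqrt_pos.2 hlam
  set H : ℝ → ℝ := fun t => Real.sqrt (A t) - t / (2 * Real.sqrt lam) with hHdef
  have hHcont : ContinuousOn H (Set.Icc δ r) := by
    apply ContinuousOn.sub
    · exact Real.continuous_sqrt.comp_continuousOn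
        (hAcont.mono (Set.Icc_subset_Icc h0δ.le hrr'.le))
    · exact (continuous_id.div_const _).continuousOn
  have hHderiv : ∀ x ∈ Set.Ioo δ r, x ∉ T → ∃ d, 0 ≤ d ∧ HasDerivAt H d x := by
    intro x hx hxT
    have hd := hAderiv x hx hxT
    have hAx : 0 < A x := hApos x ⟨hx.1, hx.2.trans hrr'⟩
    have hsA : 0 < Real.sqrt (A x) := Real.sqrt_pos.2 hAx
    have hlx : 0 < l x := hpos x ⟨hx.1, (hx.2.trans hrr').trans hr'half⟩
    have hAle : A x ≤ lam * l x ^ 2 :=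
      hA_le x ⟨hx.1, (hx.2.trans hrr').trans hr'half⟩ (hx.2.trans hrr').le
    have h1 : Real.sqrt (A x) ≤ Real.sqrt lam * l x := by
      calc Real.sqrt (A x) ≤ Real.sqrt (lam * l x ^ 2) := Real.sqrt_le_sqrt hAle
        _ = Real.sqrt lam * l x := by
            rw [Real.sqrt_mul hlam.le, Real.sqrt_sq hlx.le]
    have hs : HasDerivAt (fun t => Real.sqrt (A t)) (1 / (2 * Real.sqrt (A x)) * l x) x :=
      (Real.hasDerivAt_sqrt hAx.ne').comp x hd
    refine ⟨1 / (2 * Real.sqrt (A x)) * l x - 1 / (2 * Real.sqrt lam), ?_, ?_⟩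
    · have h2 : 1 / (2 * Real.sqrt lam) ≤ 1 / (2 * Real.sqrt (A x)) * l x := by
        rw [div_mul_eq_mul_div, one_mul, div_le_div_iff₀ (by positivity) (by positivity)]
        nlinarith
      linarith
    · exact hs.sub ((hasDerivAt_id x).div_const _)
  have hH : H δ ≤ H r := mono_aux_finset T H δ r hr.1.le hHcont hHderiv
  have hkey : (r - δ) / (2 * Real.sqrt lam) ≤ Real.sqrt (A r) := by
    have h0 : 0 ≤ Real.sqrt (A δ) := Real.sqrt_nonneg _
    have hsub : (r - δ) / (2 * Real.sqrt lam)
        = r / (2 * Real.sqrt lam) - δ / (2 * Real.sqrt lam) := sub_div _ _ _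
    rw [hHdef] at hH
    simp only [] at hH
    linarith
  have hAr0 : (0:ℝ) ≤ A r :=
    intervalIntegral.integral_nonneg (h0δ.trans hr.1).le
      (fun u hu => hl0 u ⟨hu.1, hu.2.trans hrr'.le⟩)
  have hfinal : (r - δ) ^ 2 / (4 * lam) ≤ A r := by
    have h2 : ((r - δ) / (2 * Real.sqrt lam)) ^ 2 ≤ Real.sqrt (A r) ^ 2 :=
      pow_le_pow_left₀ (div_nonneg (by linarith [hr.1]) (by positivity)) hkey 2
    rw [Real.sq_sqrt hAr0] at h2
    calc (r - δ) ^ 2 / (4 * lam) = ((r - δ) / (2 * Real.sqrt lam)) ^ 2 := by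
          rw [div_pow, mul_pow, Real.sq_sqrt hlam.le]; norm_num
      _ ≤ A r := h2
  rw [hconv r (h0δ.trans hr.1).le hrr'.le]
  exact ENNReal.ofReal_le_ofReal hfinal
end
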